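/- Let N ≥ 1, let Q ∈ ℝ^{N×N} be symmetric positive definite, let p : ℝ^N → ℝ be differentiable, and define the structured surrogate S : ℝ^N → ℝ by S(x) = (√(xᵀQx) + p(x))². Then: (a) at every x ≠ 0, S is differentiable with gradient ∇S(x) = 2(√(xᵀQx) + p(x)) (Qx/√(xᵀQx) + ∇p(x)); and (b) if at a point x_j ≠ 0 and for values v_j > 0 and w_j ∈ ℝ^N the interpolation data conditions p(x_j) = √(v_j) − √(x_jᵀQx_j) and ∇p(x_j) = w_j/(2√(v_j)) − Qx_j/√(x_jᵀQx_j) hold, then S(x_j) = v_j and ∇S(x_j) = w_j. -/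

import Mathlib

open InnerProductSpace

variable {F : Type*} [NormedAddCommGroup F] [InnerProductSpace ℝ F] [CompleteSpace F]

lemma hga_add {f g : F → ℝ} {a b x : F} (hf : HasGradientAt f a x) (hg : HasGradientAt g b x) :
    HasGradientAt (fun y => f y + g y) (a + b) x := by
  rw [hasGradientAt_iff_hasFDerivAt] at *
  rw [map_add]; exact hf.add hg

lemma hga_comp_deriv {f : F → ℝ} {a x : F} {u : ℝ → ℝ} {c : ℝ}
    (hu : HasDerivAt u c (f x)) (hf : HasGradientAt f a x) :
    HasGradientAt (fun y => u (f y)) (c • a) x := by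
  rw [hasGradientAt_iff_hasFDerivAt] at *
  have h := hu.comp_hasFDerivAt x hf
  rw [map_smul]; exact h

lemma hga_sq {f : F → ℝ} {a x : F} (hf : HasGradientAt f a x) :
    HasGradientAt (fun y => f y ^ 2) ((2 * f x) • a) x := by
  have hu : HasDerivAt (fun t : ℝ => t ^ 2) (2 * f x) (f x) := by
    simpa using hasDerivAt_pow 2 (f x)
  have h := hga_comp_deriv hu hf
  simpa [smul_smul] using h

lemma hga_quadform [FiniteDimensional ℝ F] (L : F →ₗ[ℝ] F)
    (hsym : L.IsSymmetric) (x : F) :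
    HasGradientAt (fun y => (inner ℝ y (L y) : ℝ)) ((2 : ℝ) • L x) x := by
  rw [hasGradientAt_iff_hasFDerivAt]
  have hL := (LinearMap.toContinuousLinearMap L).hasFDerivAt (x := x)
  have h := (hasFDerivAt_id x).inner ℝ hL
  refine h.congr_fderiv ?_
  ext y
  simp [fderivInnerCLM_apply, real_inner_smul_left, real_inner_comm (L x) y, hsym x y,
    two_mul]


/-- The structured Hermite surrogate of the paper:
`S(x) = (√(xᵀQx) + p(x))²` with `Q` symmetric positive definite and `p` the
kernel correction term.  (a) Away from the origin, `S` has gradient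
`∇S(x) = 2(√(xᵀQx)+p(x))(Qx/√(xᵀQx) + ∇p(x))`.  (b) The linear interpolation
conditions on `p` at a point `x_j ≠ 0` with data `v_j > 0`, `w_j` imply the
nonlinear Hermite conditions `S(x_j) = v_j` and `∇S(x_j) = w_j`. -/
theorem structured_surrogate_interpolation {N : ℕ} (hN : 1 ≤ N)
    (Q : Matrix (Fin N) (Fin N) ℝ) (hQ : Q.PosDef)
    (p : EuclideanSpace ℝ (Fin N) → ℝ)
    (Dp : EuclideanSpace ℝ (Fin N) → EuclideanSpace ℝ (Fin N))
    (hp : ∀ x, HasGradientAt p (Dp x) x) :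
    let q : EuclideanSpace ℝ (Fin N) → ℝ :=
      fun x => (inner ℝ x (Matrix.toEuclideanLin Q x) : ℝ)
    let S : EuclideanSpace ℝ (Fin N) → ℝ :=
      fun x => (Real.sqrt (q x) + p x) ^ 2
    (∀ x : EuclideanSpace ℝ (Fin N), x ≠ 0 →
      HasGradientAt S ((2 * (Real.sqrt (q x) + p x)) •
        ((Real.sqrt (q x))⁻¹ • Matrix.toEuclideanLin Q x + Dp x)) x) ∧
    (∀ (xj : EuclideanSpace ℝ (Fin N)) (vj : ℝ) (wj : EuclideanSpace ℝ (Fin N)),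
      xj ≠ 0 → 0 < vj →
      p xj = Real.sqrt vj - Real.sqrt (q xj) →
      Dp xj = (2 * Real.sqrt vj)⁻¹ • wj -
        (Real.sqrt (q xj))⁻¹ • Matrix.toEuclideanLin Q xj →
      S xj = vj ∧ HasGradientAt S wj xj) := by
  intro q S
  set L : EuclideanSpace ℝ (Fin N) →ₗ[ℝ] EuclideanSpace ℝ (Fin N) :=
    Matrix.toEuclideanLin Q with hL
  have hsym : L.IsSymmetric := Matrix.isHermitian_iff_isSymmetric.mp hQ.isHermitian
  have hqpos : ∀ x : EuclideanSpace ℝ (Fin N), x ≠ 0 → 0 < q x := by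
    intro x hx
    have := hQ.re_dotProduct_pos (x := (WithLp.equiv 2 _ x)) (by simpa using hx)
    simpa [q, Matrix.toEuclideanLin_apply, inner, dotProduct, mul_comm] using this
  have key : ∀ x : EuclideanSpace ℝ (Fin N), x ≠ 0 →
      HasGradientAt S ((2 * (Real.sqrt (q x) + p x)) •
        ((Real.sqrt (q x))⁻¹ • L x + Dp x)) x := by
    intro x hx
    have hq : HasGradientAt q ((2 : ℝ) • L x) x := hga_quadform L hsym x
    have hs : Real.sqrt (q x) ≠ 0 := ne_of_gt (Real.sqrt_pos.mpr (hqpos x hx))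
    have hsq : HasGradientAt (fun y => Real.sqrt (q y)) ((Real.sqrt (q x))⁻¹ • L x) x := by
      have hu : HasDerivAt Real.sqrt (1 / (2 * Real.sqrt (q x))) (q x) :=
        Real.hasDerivAt_sqrt (ne_of_gt (hqpos x hx))
      have h := hga_comp_deriv hu hq
      have : (1 / (2 * Real.sqrt (q x))) • ((2 : ℝ) • L x) = (Real.sqrt (q x))⁻¹ • L x := by
        rw [smul_smul]
        congr 1
        field_simp
      rwa [this] at h
    have hadd := hga_add hsq (hp x)
    have := hga_sq hadd
    simpa [S] using this
  refine ⟨key, ?_⟩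
  intro xj vj wj hxj hvj hpj hDpj
  have hq0 : 0 < q xj := hqpos xj hxj
  have hsum : Real.sqrt (q xj) + p xj = Real.sqrt vj := by rw [hpj]; ring
  have hSval : S xj = vj := by
    simp [S, hsum, Real.sq_sqrt hvj.le]
  refine ⟨hSval, ?_⟩
  have h := key xj hxj
  have hveq : (2 * (Real.sqrt (q xj) + p xj)) •
      ((Real.sqrt (q xj))⁻¹ • L xj + Dp xj) = wj := by
    rw [hsum, hDpj]
    have h2 : (2 * Real.sqrt vj) ≠ 0 := by positivity
    rw [show (Real.sqrt (q xj))⁻¹ • L xj + ((2 * Real.sqrt vj)⁻¹ • wj -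
        (Real.sqrt (q xj))⁻¹ • L xj) = (2 * Real.sqrt vj)⁻¹ • wj by abel]
    rw [smul_smul, mul_inv_cancel₀ h2, one_smul]
  rwa [hveq] at h
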